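/- Let {x_n}, {y_n^i}, {z_n^j} be the sequences generated by Algorithm 1 (under the hypotheses of Theorem 3.1). Then {x_n} is a Cauchy sequence and lim_{n→∞} ‖x_n − y_n^i‖ = lim_{n→∞} ‖x_n − z_n^j‖ = lim_{n→∞} ‖x_n − S_j x_n‖ = 0 for all i = 1,…,N and j = 1,…,M. -/

import Mathlib

open scoped RealInnerProductSpace
open Filter Topology

/-- `p` is the metric projection of `x` onto `K`. -/
def IsProjOn {H : Type*} [NormedAddCommGroup H] (K : Set H) (x p : H) : Prop :=
  p ∈ K ∧ ∀ v ∈ K, ‖p - x‖ ≤ ‖v - x‖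

namespace Alg1Aux

variable {H : Type*} [NormedAddCommGroup H] [InnerProductSpace ℝ H]

lemma combo_norm_sq (a b : ℝ) (hab : a + b = 1) (u w : H) :
    ‖a • u + b • w‖ ^ 2 = a * ‖u‖ ^ 2 + b * ‖w‖ ^ 2 - a * b * ‖u - w‖ ^ 2 := by
  have hb : b = 1 - a := by linarith
  subst hb
  simp only [← real_inner_self_eq_norm_sq, inner_add_left, inner_add_right,
    inner_sub_left, inner_sub_right, real_inner_smul_left, real_inner_smul_right,
    real_inner_comm u w]
  ring

/-- variational characterization of projection -/
lemma proj_inner_le {K : Set H} (hK : Convex ℝ K) {x p : H}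
    (hp : IsProjOn K x p) : ∀ w ∈ K, ⟪x - p, w - p⟫ ≤ 0 := by
  intro w hw
  by_contra hlt
  push_neg at hlt
  have hwp : w - p ≠ 0 := by
    intro h0
    rw [h0, inner_zero_right] at hlt; exact lt_irrefl _ hlt
  have hnp : 0 < ‖w - p‖ ^ 2 := pow_pos (norm_pos_iff.mpr hwp) 2
  set δ : ℝ := ⟪x - p, w - p⟫ with hδ
  set t : ℝ := min 1 (δ / ‖w - p‖ ^ 2) with ht
  have ht0 : 0 < t := lt_min one_pos (div_pos hlt hnp)
  have ht1 : t ≤ 1 := min_le_left _ _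
  have htb : t * ‖w - p‖ ^ 2 ≤ δ := by
    have h' : t ≤ δ / ‖w - p‖ ^ 2 := min_le_right _ _
    calc t * ‖w - p‖ ^ 2 ≤ (δ / ‖w - p‖ ^ 2) * ‖w - p‖ ^ 2 :=
          mul_le_mul_of_nonneg_right h' hnp.le
      _ = δ := by field_simp
  have hq : p + t • (w - p) ∈ K := by
    have h2 := hK hp.1 hw (by linarith : (0:ℝ) ≤ 1 - t) ht0.le (by ring)
    convert h2 using 1
    module
  have hle := hp.2 _ hq
  have hsq : ‖p - x‖ ^ 2 ≤ ‖p + t • (w - p) - x‖ ^ 2 := by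
    have h0 : (0:ℝ) ≤ ‖p - x‖ := norm_nonneg _
    nlinarith [norm_nonneg (p + t • (w - p) - x)]
  have hexp : ‖p + t • (w - p) - x‖ ^ 2
      = ‖p - x‖ ^ 2 - 2 * t * δ + t ^ 2 * ‖w - p‖ ^ 2 := by
    have h1 : p + t • (w - p) - x = (p - x) + t • (w - p) := by module
    rw [h1, norm_add_sq_real, real_inner_smul_right, norm_smul]
    have h2 : ⟪p - x, w - p⟫ = -δ := by
      rw [hδ, ← inner_neg_left]; norm_num
    rw [h2, Real.norm_eq_abs, mul_pow, sq_abs]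
    ring
  rw [hexp] at hsq
  nlinarith

lemma le_of_sq_le_sq' {a b : ℝ} (hb : 0 ≤ b) (h : a ^ 2 ≤ b ^ 2) : a ≤ b := by
  nlinarith [sq_nonneg (a - b), sq_nonneg (a + b)]

lemma sqrt_tendsto_zero {u : ℕ → ℝ} (h : Filter.Tendsto u Filter.atTop (nhds 0)) :
    Filter.Tendsto (fun n => Real.sqrt (u n)) Filter.atTop (nhds 0) := by
  have := (Real.continuous_sqrt.tendsto 0).comp h
  simpa [Function.comp_def] using this

lemma lip_quad {κ K c D : ℝ} (hκ0 : 0 ≤ κ) (hκ1 : κ < 1)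
    (h : D ^ 2 ≤ K * c ^ 2 + κ * (c + D) ^ 2) :
    (1 - κ) ^ 2 * D ^ 2 ≤ (1 + κ) * (K * (1 - κ) + 2 * κ) * c ^ 2 := by
  nlinarith [mul_nonneg hκ0 (sq_nonneg ((1 + κ) * c - (1 - κ) * D)),
    mul_le_mul_of_nonneg_left h (show (0:ℝ) ≤ 1 - κ ^ 2 by nlinarith)]

end Alg1Aux

set_option maxHeartbeats 2000000 in
/-- **Lemma 3.2.** For the sequences generated by Algorithm 1, `{xₙ}` is a
Cauchy sequence and `‖xₙ - yₙⁱ‖ → 0`, `‖xₙ - zₙʲ‖ → 0`, `‖xₙ - Sⱼ xₙ‖ → 0` for all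
`i = 1,…,N` and `j = 1,…,M`. -/
theorem algorithm1_cauchy_and_asymptotic_regularity
    {H : Type*} [NormedAddCommGroup H] [InnerProductSpace ℝ H] [CompleteSpace H]
    (C : Set H) (hCne : C.Nonempty) (hCcl : IsClosed C) (hCcv : Convex ℝ C)
    (N M : ℕ) (hN : 0 < N) (hM : 0 < M)
    -- the bifunctions fᵢ satisfy (A1)-(A4)
    (f : Fin N → H → H → ℝ)
    (hfA1 : ∀ i, ∀ x ∈ C, f i x x = 0)
    (hfA2 : ∀ i, ∀ x ∈ C, ∀ y ∈ C, f i x y + f i y x ≤ 0)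
    (hfA3 : ∀ i, ∀ x ∈ C, ∀ y ∈ C, ∀ z ∈ C,
      Filter.limsup (fun t : ℝ => f i (t • z + (1 - t) • x) y) (nhdsWithin 0 (Set.Ioi 0))
        ≤ f i x y)
    (hfA4conv : ∀ i, ∀ x ∈ C, ConvexOn ℝ C (f i x))
    (hfA4lsc : ∀ i, ∀ x ∈ C, LowerSemicontinuousOn (f i x) C)
    -- the operators Aᵢ are α-inverse strongly monotone on C
    (A : Fin N → H → H) (α : ℝ) (hα : 0 < α)
    (hism : ∀ i, ∀ x ∈ C, ∀ y ∈ C, α * ‖A i x - A i y‖ ^ 2 ≤ ⟪A i x - A i y, x - y⟫)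
    -- the mappings Sⱼ : C → C are asymptotically κ-strictly pseudocontractive with
    -- the same sequence {kₙ} ⊆ [1,∞), kₙ → 1
    (S : Fin M → H → H) (hS : ∀ j, Set.MapsTo (S j) C C)
    (κ : ℝ) (hκ0 : 0 ≤ κ) (hκ1 : κ < 1)
    (k : ℕ → ℝ) (hk1 : ∀ n, 1 ≤ k n)
    (hklim : Filter.Tendsto k Filter.atTop (nhds 1))
    (hasym : ∀ j, ∀ n, 1 ≤ n → ∀ x ∈ C, ∀ y ∈ C,
      ‖(S j)^[n] x - (S j)^[n] y‖ ^ 2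
        ≤ k n * ‖x - y‖ ^ 2 + κ * ‖(x - (S j)^[n] x) - (y - (S j)^[n] y)‖ ^ 2)
    -- the solution set F is nonempty and bounded by ω
    (F : Set H)
    (hF : F = {v ∈ C | ∀ i, ∀ y ∈ C, 0 ≤ f i v y + ⟪A i v, y - v⟫} ∩
      {v | ∀ j, S j v = v})
    (hFne : F.Nonempty) (ω : ℝ) (hω : 0 < ω) (hFb : ∀ v ∈ F, ‖v‖ ≤ ω)
    -- control parameters
    (a : ℕ → ℝ) (ha0 : ∀ n, 0 < a n) (ha1 : ∀ n, a n < 1)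
    (halimsup : Filter.limsup a Filter.atTop < 1)
    (β : ℕ → ℝ) (b : ℝ) (hbκ : κ < b) (hb1 : b < 1) (hβ : ∀ n, κ ≤ β n ∧ β n ≤ b)
    (r : ℕ → ℝ) (d e : ℝ) (hd : 0 < d) (he : e < 2 * α) (hr : ∀ n, d ≤ r n ∧ r n ≤ e)
    -- the iterates of Algorithm 1
    (x : ℕ → H) (y : ℕ → Fin N → H) (z : ℕ → Fin M → H)
    (iN : ℕ → Fin N) (jM : ℕ → Fin M) (ybar zbar : ℕ → H) (Cset : ℕ → Set H)
    (hx0 : x 0 ∈ C) (hC0 : Cset 0 = C)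
    -- (i) yₙⁱ solves the regularized generalized equilibrium problem
    (hy : ∀ n i, y n i ∈ C ∧ ∀ w ∈ C,
      0 ≤ f i (y n i) w + ⟪A i (x n), w - y n i⟫ +
        (1 / r n) * ⟪w - y n i, y n i - x n⟫)
    -- (ii) iₙ maximizes ‖yₙⁱ - xₙ‖ and ȳₙ = yₙ^{iₙ}
    (hiN : ∀ n i, ‖y n i - x n‖ ≤ ‖y n (iN n) - x n‖)
    (hybar : ∀ n, ybar n = y n (iN n))
    -- (iii) zₙʲ = αₙ xₙ + (1-αₙ)(βₙ ȳₙ + (1-βₙ) Sⱼⁿ ȳₙ)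
    (hz : ∀ n j, z n j = a n • x n +
      (1 - a n) • (β n • ybar n + (1 - β n) • (S j)^[n] (ybar n)))
    -- (iv) jₙ maximizes ‖zₙʲ - xₙ‖ and z̄ₙ = zₙ^{jₙ}
    (hjM : ∀ n j, ‖z n j - x n‖ ≤ ‖z n (jM n) - x n‖)
    (hzbar : ∀ n, zbar n = z n (jM n))
    -- (v) Cₙ₊₁ = {v ∈ Cₙ : ‖z̄ₙ - v‖² ≤ ‖xₙ - v‖² + εₙ}, εₙ = (kₙ - 1)(‖xₙ‖ + ω)²
    (hCset : ∀ n, Cset (n + 1) =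
      {v ∈ Cset n | ‖zbar n - v‖ ^ 2 ≤ ‖x n - v‖ ^ 2 + (k n - 1) * (‖x n‖ + ω) ^ 2})
    -- (vi) xₙ₊₁ = P_{Cₙ₊₁} x₀
    (hxproj : ∀ n, IsProjOn (Cset (n + 1)) (x 0) (x (n + 1))) :
    CauchySeq x ∧
      (∀ i, Filter.Tendsto (fun n => ‖x n - y n i‖) Filter.atTop (nhds 0)) ∧
      (∀ j, Filter.Tendsto (fun n => ‖x n - z n j‖) Filter.atTop (nhds 0)) ∧
      (∀ j, Filter.Tendsto (fun n => ‖x n - S j (x n)‖) Filter.atTop (nhds 0)) := by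
  classical
  -- the solution point
  obtain ⟨v, hv⟩ := hFne
  have hvmem := hF ▸ hv
  have hvC : v ∈ C := hvmem.1.1
  have hvGEP : ∀ i, ∀ w ∈ C, 0 ≤ f i v w + ⟪A i v, w - v⟫ := hvmem.1.2
  have hvS : ∀ j, S j v = v := hvmem.2
  have hvSn : ∀ j n, (S j)^[n] v = v := fun j n => Function.iterate_fixed (hvS j) n
  have hvω : ‖v‖ ≤ ω := hFb v hv
  -- parameter facts
  have hr0 : ∀ n, 0 < r n := fun n => lt_of_lt_of_le hd (hr n).1
  have hde : d ≤ e := le_trans (hr 0).1 (hr 0).2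
  have h2αe : 0 < 2 * α - e := by linarith
  have hde2 : 0 < d * (2 * α - e) := mul_pos hd h2αe
  -- basic structure of the sets Cₙ
  have hCsub : ∀ n, Cset (n + 1) ⊆ Cset n := by
    intro n
    rw [hCset n]; exact fun w hw => hw.1
  have hCanti : Antitone Cset := antitone_nat_of_succ_le hCsub
  have hCsubC : ∀ n, Cset n ⊆ C := by
    intro n
    induction n with
    | zero => rw [hC0]
    | succ m ih => exact (hCsub m).trans ih
  have hxC : ∀ n, x n ∈ Cset n := by
    intro n
    cases n with
    | zero => rw [hC0]; exact hx0
    | succ m => exact (hxproj m).1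
  have hxCC : ∀ n, x n ∈ C := fun n => hCsubC n (hxC n)
  have hyC : ∀ n i, y n i ∈ C := fun n i => (hy n i).1
  have hybarC : ∀ n, ybar n ∈ C := by intro n; rw [hybar n]; exact hyC n (iN n)
  -- convexity of the sets Cₙ
  have hCsetCv : ∀ n, Convex ℝ (Cset n) := by
    intro n
    induction n with
    | zero => rw [hC0]; exact hCcv
    | succ m ih =>
      rw [hCset m]
      intro u hu w hw s t hs ht hst
      refine ⟨ih hu.1 hw.1 hs ht hst, ?_⟩
      have e1 : zbar m - (s • u + t • w) = s • (zbar m - u) + t • (zbar m - w) := by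
        have h1 : s • (zbar m - u) + t • (zbar m - w)
            = (s + t) • zbar m - (s • u + t • w) := by module
        rw [h1, hst, one_smul]
      have e2 : x m - (s • u + t • w) = s • (x m - u) + t • (x m - w) := by
        have h1 : s • (x m - u) + t • (x m - w)
            = (s + t) • x m - (s • u + t • w) := by module
        rw [h1, hst, one_smul]
      have e3 : (zbar m - u) - (zbar m - w) = w - u := by abel
      have e4 : (x m - u) - (x m - w) = w - u := by abel
      have c1 := Alg1Aux.combo_norm_sq s t hst (zbar m - u) (zbar m - w)
      have c2 := Alg1Aux.combo_norm_sq s t hst (x m - u) (x m - w)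
      rw [e3] at c1
      rw [e4] at c2
      rw [e1, e2, c1, c2]
      have b1 := mul_le_mul_of_nonneg_left hu.2 hs
      have b2 := mul_le_mul_of_nonneg_left hw.2 ht
      nlinarith [b1, b2]
  -- the fundamental estimate on yₙⁱ
  have hyv : ∀ n i, ‖y n i - v‖ ^ 2 ≤ ‖x n - v‖ ^ 2
      - (‖x n - y n i‖ - r n * ‖A i (x n) - A i v‖) ^ 2
      - r n * (2 * α - r n) * ‖A i (x n) - A i v‖ ^ 2 := by
    intro n i
    have hrn := hr0 n
    have h1 := (hy n i).2 v hvC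
    have h2 := hvGEP i (y n i) (hyC n i)
    have h3 := hfA2 i (y n i) (hyC n i) v hvC
    have e1 : ⟪A i v, y n i - v⟫ = -⟪A i v, v - y n i⟫ := by
      rw [show y n i - v = -(v - y n i) by abel, inner_neg_right]
    have e2 : ⟪A i (x n) - A i v, v - y n i⟫
        = ⟪A i (x n), v - y n i⟫ - ⟪A i v, v - y n i⟫ := inner_sub_left _ _ _
    have h4 : 0 ≤ ⟪A i (x n) - A i v, v - y n i⟫
        + (1 / r n) * ⟪v - y n i, y n i - x n⟫ := by
      rw [e2]; linarith
    have key : 0 ≤ r n * ⟪A i (x n) - A i v, v - y n i⟫ + ⟪v - y n i, y n i - x n⟫ := by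
      have h5 := mul_le_mul_of_nonneg_left h4 hrn.le
      have h6 : r n * (⟪A i (x n) - A i v, v - y n i⟫
          + (1 / r n) * ⟪v - y n i, y n i - x n⟫)
          = r n * ⟪A i (x n) - A i v, v - y n i⟫ + ⟪v - y n i, y n i - x n⟫ := by
        field_simp
      rw [h6] at h5; linarith
    have hism' := hism i (x n) (hxCC n) v hvC
    have hCS : ⟪A i (x n) - A i v, x n - y n i⟫
        ≤ ‖A i (x n) - A i v‖ * ‖x n - y n i‖ := real_inner_le_norm _ _
    have hsplit : ⟪A i (x n) - A i v, v - y n i⟫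
        = ⟪A i (x n) - A i v, x n - y n i⟫ - ⟪A i (x n) - A i v, x n - v⟫ := by
      rw [← inner_sub_right]; congr 1; abel
    have hpol : 2 * ⟪v - y n i, y n i - x n⟫
        = ‖v - x n‖ ^ 2 - ‖v - y n i‖ ^ 2 - ‖y n i - x n‖ ^ 2 := by
      have e : (v - y n i) + (y n i - x n) = v - x n := by abel
      have h5 := norm_add_sq_real (v - y n i) (y n i - x n)
      rw [e] at h5; linarith
    have n1 : ‖v - x n‖ = ‖x n - v‖ := norm_sub_rev _ _
    have n2 : ‖v - y n i‖ = ‖y n i - v‖ := norm_sub_rev _ _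
    have n3 : ‖y n i - x n‖ = ‖x n - y n i‖ := norm_sub_rev _ _
    rw [n1, n2, n3] at hpol
    have p1 : r n * ⟪A i (x n) - A i v, v - y n i⟫
        ≤ r n * (‖A i (x n) - A i v‖ * ‖x n - y n i‖ - α * ‖A i (x n) - A i v‖ ^ 2) := by
      apply mul_le_mul_of_nonneg_left _ hrn.le
      rw [hsplit]; linarith
    nlinarith [key, p1, hpol]
  -- the estimate on zₙʲ
  have hzv : ∀ n j, ‖z n j - v‖ ^ 2
      ≤ a n * ‖x n - v‖ ^ 2 + (1 - a n) * (k n * ‖ybar n - v‖ ^ 2) := by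
    intro n j
    have hβn := hβ n
    have hkn := hk1 n
    have han0 := ha0 n
    have han1 := ha1 n
    have htv : ‖β n • ybar n + (1 - β n) • (S j)^[n] (ybar n) - v‖ ^ 2
        ≤ k n * ‖ybar n - v‖ ^ 2 := by
      have e1 : β n • ybar n + (1 - β n) • (S j)^[n] (ybar n) - v
          = β n • (ybar n - v) + (1 - β n) • ((S j)^[n] (ybar n) - v) := by module
      have e2 := Alg1Aux.combo_norm_sq (β n) (1 - β n) (by ring)
        (ybar n - v) ((S j)^[n] (ybar n) - v)
      have e3 : (ybar n - v) - ((S j)^[n] (ybar n) - v)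
          = ybar n - (S j)^[n] (ybar n) := by abel
      rw [e3] at e2
      rw [e1, e2]
      rcases Nat.eq_zero_or_pos n with h0 | h1
      · subst h0
        simp only [Function.iterate_zero, id_eq, sub_self, norm_zero]
        have hY := sq_nonneg ‖ybar 0 - v‖
        nlinarith [hY]
      · have hs' := hasym j n h1 (ybar n) (hybarC n) v hvC
        rw [hvSn j n] at hs'
        have e4 : (ybar n - (S j)^[n] (ybar n)) - (v - v)
            = ybar n - (S j)^[n] (ybar n) := by abel
        rw [e4] at hs'
        have m1 := mul_le_mul_of_nonneg_left hs'
          (show (0:ℝ) ≤ 1 - β n by linarith [hβn.2])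
        have m2 := mul_nonneg (mul_nonneg
          (show (0:ℝ) ≤ β n by linarith [hβn.1])
          (show (0:ℝ) ≤ k n - 1 by linarith)) (sq_nonneg ‖ybar n - v‖)
        have m3 := mul_nonneg (mul_nonneg
          (show (0:ℝ) ≤ 1 - β n by linarith [hβn.2])
          (show (0:ℝ) ≤ β n - κ by linarith [hβn.1]))
          (sq_nonneg ‖ybar n - (S j)^[n] (ybar n)‖)
        nlinarith [m1, m2, m3]
    have e5 : z n j - v = a n • (x n - v)
        + (1 - a n) • (β n • ybar n + (1 - β n) • (S j)^[n] (ybar n) - v) := by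
      rw [hz n j]; module
    have e6 := Alg1Aux.combo_norm_sq (a n) (1 - a n) (by ring)
      (x n - v) (β n • ybar n + (1 - β n) • (S j)^[n] (ybar n) - v)
    rw [e5, e6]
    have m4 := mul_le_mul_of_nonneg_left htv (show (0:ℝ) ≤ 1 - a n by linarith)
    have m5 := mul_nonneg (mul_nonneg han0.le (show (0:ℝ) ≤ 1 - a n by linarith))
      (sq_nonneg ‖(x n - v) - (β n • ybar n + (1 - β n) • (S j)^[n] (ybar n) - v)‖)
    nlinarith [m4, m5]
  -- consequence: ‖ȳₙ - v‖ ≤ ‖xₙ - v‖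
  have hybv : ∀ n, ‖ybar n - v‖ ^ 2 ≤ ‖x n - v‖ ^ 2 := by
    intro n
    rw [hybar n]
    have h1 := hyv n (iN n)
    have h2 : 0 ≤ r n * (2 * α - r n) * ‖A (iN n) (x n) - A (iN n) v‖ ^ 2 :=
      mul_nonneg (mul_nonneg (hr0 n).le (by linarith [(hr n).2])) (sq_nonneg _)
    nlinarith [sq_nonneg (‖x n - y n (iN n)‖ - r n * ‖A (iN n) (x n) - A (iN n) v‖)]
  -- v belongs to every Cₙ
  have hvCset : ∀ n, v ∈ Cset n := by
    intro n
    induction n with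
    | zero => rw [hC0]; exact hvC
    | succ m ih =>
      rw [hCset m]
      refine ⟨ih, ?_⟩
      rw [hzbar m]
      have h1 := hzv m (jM m)
      have h3 := hybv m
      have h4 : ‖x m - v‖ ≤ ‖x m‖ + ω := by
        calc ‖x m - v‖ ≤ ‖x m‖ + ‖v‖ := norm_sub_le _ _
          _ ≤ ‖x m‖ + ω := by linarith
      have h5 : ‖x m - v‖ ^ 2 ≤ (‖x m‖ + ω) ^ 2 := by
        nlinarith [norm_nonneg (x m - v)]
      have hkm := hk1 m
      have ham0 := ha0 m
      have ham1 := ha1 m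
      have m1 : (1 - a m) * (k m * ‖ybar m - v‖ ^ 2)
          ≤ (1 - a m) * (k m * ‖x m - v‖ ^ 2) :=
        mul_le_mul_of_nonneg_left
          (mul_le_mul_of_nonneg_left h3 (by linarith)) (by linarith)
      have m2 := mul_nonneg (mul_nonneg ham0.le
        (show (0:ℝ) ≤ k m - 1 by linarith)) (sq_nonneg ‖x m - v‖)
      have m3 := mul_le_mul_of_nonneg_left h5
        (show (0:ℝ) ≤ k m - 1 by linarith)
      nlinarith [h1, m1, m2, m3]
  -- monotone bounded sequence sₙ = ‖xₙ - x₀‖²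
  set s : ℕ → ℝ := fun n => ‖x n - x 0‖ ^ 2 with hs_def
  have hs0 : s 0 = 0 := by simp [hs_def]
  have hsmono : Monotone s := by
    apply monotone_nat_of_le_succ
    intro n
    cases n with
    | zero => rw [hs0]; exact sq_nonneg _
    | succ m =>
      have h1 : x (m + 2) ∈ Cset (m + 1) := hCsub (m + 1) (hxC (m + 2))
      have h2 := (hxproj m).2 (x (m + 2)) h1
      have := norm_nonneg (x (m + 1) - x 0)
      simp only [hs_def]
      nlinarith
  have hsbdd : ∀ n, s n ≤ ‖v - x 0‖ ^ 2 := by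
    intro n
    cases n with
    | zero => rw [hs0]; exact sq_nonneg _
    | succ m =>
      have h2 := (hxproj m).2 v (hvCset (m + 1))
      have := norm_nonneg (x (m + 1) - x 0)
      simp only [hs_def]
      nlinarith
  have hbddrange : BddAbove (Set.range s) := by
    refine ⟨‖v - x 0‖ ^ 2, ?_⟩
    rintro _ ⟨n, rfl⟩
    exact hsbdd n
  set L : ℝ := ⨆ n, s n with hL_def
  have hLlim : Filter.Tendsto s Filter.atTop (nhds L) := tendsto_atTop_ciSup hsmono hbddrange
  have hsL : ∀ n, s n ≤ L := fun n => le_ciSup hbddrange n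
  have hLs0 : Filter.Tendsto (fun n => L - s n) Filter.atTop (nhds 0) := by
    have := hLlim.const_sub L
    simpa using this
  -- the key Cauchy estimate
  have hkey : ∀ m n, 1 ≤ n → n ≤ m → ‖x m - x n‖ ^ 2 ≤ s m - s n := by
    intro m n h1 hnm
    obtain ⟨p, rfl⟩ : ∃ p, n = p + 1 := ⟨n - 1, by omega⟩
    have hxm : x m ∈ Cset (p + 1) := hCanti hnm (hxC m)
    have hvar := Alg1Aux.proj_inner_le (hCsetCv (p + 1)) (hxproj p) (x m) hxm
    have hge : 0 ≤ ⟪x m - x (p + 1), x (p + 1) - x 0⟫ := by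
      have e : ⟪x m - x (p + 1), x (p + 1) - x 0⟫
          = -⟪x 0 - x (p + 1), x m - x (p + 1)⟫ := by
        rw [real_inner_comm, show x (p + 1) - x 0 = -(x 0 - x (p + 1)) by abel,
          inner_neg_left]
      rw [e]; linarith
    have hexp : s m = ‖x m - x (p + 1)‖ ^ 2
        + 2 * ⟪x m - x (p + 1), x (p + 1) - x 0⟫ + s (p + 1) := by
      have e : (x m - x (p + 1)) + (x (p + 1) - x 0) = x m - x 0 := by abel
      have h5 := norm_add_sq_real (x m - x (p + 1)) (x (p + 1) - x 0)
      rw [e] at h5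
      simp only [hs_def]
      linarith
    linarith
  -- x is Cauchy
  set B : ℝ := ‖v - x 0‖ ^ 2 with hB_def
  have hB0 : 0 ≤ B := sq_nonneg _
  have hsnorm : ∀ n, ‖x n - x 0‖ ≤ Real.sqrt B := by
    intro n
    have h1 : ‖x n - x 0‖ = Real.sqrt (s n) := by
      rw [hs_def]; exact (Real.sqrt_sq (norm_nonneg _)).symm
    rw [h1]
    exact Real.sqrt_le_sqrt (hsbdd n)
  have hLs_nonneg : ∀ n, 0 ≤ L - s n := fun n => sub_nonneg.mpr (hsL n)
  have hpair : ∀ n m N0, 1 ≤ N0 → N0 ≤ n → N0 ≤ m →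
      dist (x n) (x m) ≤ Real.sqrt (L - s N0) := by
    intro n m N0 hN0 hn hm
    have main : ∀ p q, N0 ≤ p → N0 ≤ q → p ≤ q →
        dist (x p) (x q) ≤ Real.sqrt (L - s N0) := by
      intro p q hp hq hpq
      have h1 := hkey q p (le_trans hN0 hp) hpq
      have h2 : ‖x q - x p‖ ^ 2 ≤ L - s N0 := by
        have := hsL q
        have := hsmono hp
        linarith
      rw [dist_eq_norm, norm_sub_rev]
      calc ‖x q - x p‖ = Real.sqrt (‖x q - x p‖ ^ 2) :=
            (Real.sqrt_sq (norm_nonneg _)).symm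
        _ ≤ Real.sqrt (L - s N0) := Real.sqrt_le_sqrt h2
    rcases le_total n m with h | h
    · exact main n m hn hm h
    · rw [dist_comm]; exact main m n hm hn h
  have hcseq : CauchySeq x := by
    apply cauchySeq_of_le_tendsto_0
      (fun N0 => if N0 = 0 then 2 * Real.sqrt B else Real.sqrt (L - s N0))
    · intro n m N0 hn hm
      rcases eq_or_ne N0 0 with h0 | h0
      · subst h0
        simp only [if_pos rfl]
        rw [dist_eq_norm]
        calc ‖x n - x m‖ ≤ ‖x n - x 0‖ + ‖x m - x 0‖ := by
              have : x n - x m = (x n - x 0) - (x m - x 0) := by abel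
              rw [this]; exact norm_sub_le _ _
          _ ≤ 2 * Real.sqrt B := by linarith [hsnorm n, hsnorm m]
      · rw [if_neg h0]
        exact hpair n m N0 (Nat.one_le_iff_ne_zero.mpr h0) hn hm
    · have h1 : Filter.Tendsto (fun N0 => Real.sqrt (L - s N0)) Filter.atTop (nhds 0) :=
        Alg1Aux.sqrt_tendsto_zero hLs0
      apply h1.congr'
      filter_upwards [Filter.eventually_gt_atTop 0] with n hn
      rw [if_neg (Nat.pos_iff_ne_zero.mp hn)]
  -- successive differences tend to 0
  have hdist : Filter.Tendsto (fun n => ‖x (n + 1) - x n‖) Filter.atTop (nhds 0) := by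
    apply squeeze_zero' (Filter.Eventually.of_forall fun n => norm_nonneg _)
      (g := fun n => Real.sqrt (L - s n)) _ (Alg1Aux.sqrt_tendsto_zero hLs0)
    filter_upwards [Filter.eventually_ge_atTop 1] with n hn
    have h1 := hkey (n + 1) n hn (Nat.le_succ n)
    have h2 : ‖x (n + 1) - x n‖ ^ 2 ≤ L - s n := by
      have := hsL (n + 1); linarith
    calc ‖x (n + 1) - x n‖ = Real.sqrt (‖x (n + 1) - x n‖ ^ 2) :=
          (Real.sqrt_sq (norm_nonneg _)).symm
      _ ≤ Real.sqrt (L - s n) := Real.sqrt_le_sqrt h2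
  -- x is bounded
  set X : ℝ := ‖x 0‖ + Real.sqrt B with hX_def
  have hxb : ∀ n, ‖x n‖ ≤ X := by
    intro n
    calc ‖x n‖ = ‖(x n - x 0) + x 0‖ := by congr 1; abel
      _ ≤ ‖x n - x 0‖ + ‖x 0‖ := norm_add_le _ _
      _ ≤ X := by rw [hX_def]; linarith [hsnorm n]
  have hXv : ∀ n, ‖x n - v‖ ≤ X + ω := by
    intro n
    calc ‖x n - v‖ ≤ ‖x n‖ + ‖v‖ := norm_sub_le _ _
      _ ≤ X + ω := add_le_add (hxb n) hvω
  have hXω0 : 0 ≤ X + ω := le_trans (norm_nonneg _) (hXv 0)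
  -- εₙ → 0
  have heps : Filter.Tendsto (fun n => (k n - 1) * (‖x n‖ + ω) ^ 2)
      Filter.atTop (nhds 0) := by
    have h1 : Filter.Tendsto (fun n => (k n - 1) * (X + ω) ^ 2) Filter.atTop (nhds 0) := by
      have := (hklim.sub_const 1).mul_const ((X + ω) ^ 2)
      simpa using this
    apply squeeze_zero _ _ h1
    · intro n
      exact mul_nonneg (by linarith [hk1 n]) (sq_nonneg _)
    · intro n
      apply mul_le_mul_of_nonneg_left _ (by linarith [hk1 n])
      have h2 : ‖x n‖ + ω ≤ X + ω := by linarith [hxb n]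
      have h3 : 0 ≤ ‖x n‖ + ω := by positivity
      nlinarith
  -- ‖xₙ - z̄ₙ‖ → 0
  have hzbx : Filter.Tendsto (fun n => ‖x n - zbar n‖) Filter.atTop (nhds 0) := by
    have hmem : ∀ n, ‖zbar n - x (n + 1)‖ ^ 2
        ≤ ‖x n - x (n + 1)‖ ^ 2 + (k n - 1) * (‖x n‖ + ω) ^ 2 := by
      intro n
      have h1 := hxC (n + 1)
      rw [hCset n] at h1
      exact h1.2
    have h2 : Filter.Tendsto
        (fun n => ‖x (n + 1) - x n‖ ^ 2 + (k n - 1) * (‖x n‖ + ω) ^ 2)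
        Filter.atTop (nhds 0) := by
      have h3 : Filter.Tendsto (fun n => ‖x (n + 1) - x n‖ ^ 2) Filter.atTop (nhds 0) := by
        have := hdist.mul hdist
        simpa [sq] using this
      simpa using h3.add heps
    apply squeeze_zero (fun n => norm_nonneg _)
      (g := fun n => Real.sqrt (‖x (n + 1) - x n‖ ^ 2 + (k n - 1) * (‖x n‖ + ω) ^ 2)
        + ‖x (n + 1) - x n‖)
    · intro n
      have h4 : ‖zbar n - x (n + 1)‖
          ≤ Real.sqrt (‖x (n + 1) - x n‖ ^ 2 + (k n - 1) * (‖x n‖ + ω) ^ 2) := by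
        have h5 := hmem n
        rw [norm_sub_rev (x n) (x (n + 1))] at h5
        calc ‖zbar n - x (n + 1)‖ = Real.sqrt (‖zbar n - x (n + 1)‖ ^ 2) :=
              (Real.sqrt_sq (norm_nonneg _)).symm
          _ ≤ _ := Real.sqrt_le_sqrt h5
      calc ‖x n - zbar n‖ = ‖(zbar n - x (n + 1)) + (x (n + 1) - x n)‖ := by
            rw [norm_sub_rev]; congr 1; abel
        _ ≤ ‖zbar n - x (n + 1)‖ + ‖x (n + 1) - x n‖ := norm_add_le _ _
        _ ≤ _ := by linarith
    · have := (Alg1Aux.sqrt_tendsto_zero h2).add hdist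
      simpa using this
  -- conclusion 3 : ‖xₙ - zₙʲ‖ → 0
  have conc3 : ∀ j, Filter.Tendsto (fun n => ‖x n - z n j‖) Filter.atTop (nhds 0) := by
    intro j
    apply squeeze_zero (fun n => norm_nonneg _) _ hzbx
    intro n
    calc ‖x n - z n j‖ = ‖z n j - x n‖ := norm_sub_rev _ _
      _ ≤ ‖z n (jM n) - x n‖ := hjM n j
      _ = ‖x n - zbar n‖ := by rw [hzbar n, norm_sub_rev]
  -- eventual bound on aₙ
  set c : ℝ := (Filter.limsup a Filter.atTop + 1) / 2 with hc_def
  have hc1 : c < 1 := by rw [hc_def]; linarith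
  have hac : ∀ᶠ n in Filter.atTop, a n < c := by
    apply eventually_lt_of_limsup_lt
    · rw [hc_def]; linarith
    · exact ⟨1, Filter.eventually_map.mpr (Filter.Eventually.of_forall fun n => (ha1 n).le)⟩
  -- Pₙ = ‖xₙ - v‖² - ‖ȳₙ - v‖² → 0
  set P : ℕ → ℝ := fun n => ‖x n - v‖ ^ 2 - ‖ybar n - v‖ ^ 2 with hP_def
  have hPpos : ∀ n, 0 ≤ P n := fun n => sub_nonneg.mpr (hybv n)
  have hP0 : ∀ n, (‖x n - ybar n‖ - r n * ‖A (iN n) (x n) - A (iN n) v‖) ^ 2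
      + r n * (2 * α - r n) * ‖A (iN n) (x n) - A (iN n) v‖ ^ 2 ≤ P n := by
    intro n
    have h1 := hyv n (iN n)
    rw [hP_def]
    simp only
    rw [hybar n]
    linarith
  have hPlim : Filter.Tendsto P Filter.atTop (nhds 0) := by
    apply squeeze_zero' (Filter.Eventually.of_forall hPpos)
      (g := fun n => (‖x n - zbar n‖ * (2 * (X + ω) + ‖x n - zbar n‖)
        + (k n - 1) * (X + ω) ^ 2) / (1 - c))
    · filter_upwards [hac] with n han
      have h1 := hzv n (jM n)
      rw [← hzbar n] at h1
      have hA0 : ‖x n - v‖ ≤ X + ω := hXv n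
      have htri : ‖x n - v‖ ≤ ‖zbar n - v‖ + ‖x n - zbar n‖ := by
        calc ‖x n - v‖ = ‖(x n - zbar n) + (zbar n - v)‖ := by congr 1; abel
          _ ≤ ‖x n - zbar n‖ + ‖zbar n - v‖ := norm_add_le _ _
          _ = _ := by ring
      have htri2 : ‖zbar n - v‖ ≤ ‖x n - v‖ + ‖x n - zbar n‖ := by
        calc ‖zbar n - v‖ = ‖(zbar n - x n) + (x n - v)‖ := by congr 1; abel
          _ ≤ ‖zbar n - x n‖ + ‖x n - v‖ := norm_add_le _ _
          _ = ‖x n - v‖ + ‖x n - zbar n‖ := by rw [norm_sub_rev]; ring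
      have hQZ : ‖x n - v‖ ^ 2 - ‖zbar n - v‖ ^ 2
          ≤ ‖x n - zbar n‖ * (2 * (X + ω) + ‖x n - zbar n‖) := by
        have m1 := mul_nonneg
          (show (0:ℝ) ≤ ‖x n - zbar n‖ - (‖x n - v‖ - ‖zbar n - v‖) by linarith)
          (show (0:ℝ) ≤ ‖x n - v‖ + ‖zbar n - v‖ by positivity)
        have m2 := mul_nonneg
          (show (0:ℝ) ≤ 2 * (X + ω) + ‖x n - zbar n‖ - (‖x n - v‖ + ‖zbar n - v‖) by
            linarith)
          (norm_nonneg (x n - zbar n))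
        nlinarith [m1, m2]
      have hyb : ‖ybar n - v‖ ^ 2 ≤ (X + ω) ^ 2 := by
        have := hybv n
        nlinarith [hXv n, norm_nonneg (x n - v)]
      have hkn := hk1 n
      have h2 : (1 - c) * P n ≤ ‖x n - v‖ ^ 2 - ‖zbar n - v‖ ^ 2
          + (k n - 1) * (X + ω) ^ 2 := by
        have h3 : (1 - c) * P n ≤ (1 - a n) * P n :=
          mul_le_mul_of_nonneg_right (by linarith) (hPpos n)
        have h4 : (1 - a n) * P n ≤ ‖x n - v‖ ^ 2 - ‖zbar n - v‖ ^ 2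
            + (1 - a n) * (k n - 1) * ‖ybar n - v‖ ^ 2 := by
          rw [hP_def]; simp only; nlinarith [h1]
        have h5 : (1 - a n) * (k n - 1) * ‖ybar n - v‖ ^ 2
            ≤ (k n - 1) * (X + ω) ^ 2 := by
          have ha' := ha0 n
          have m1 := mul_le_mul_of_nonneg_left hyb
            (show (0:ℝ) ≤ k n - 1 by linarith)
          have m2 := mul_nonneg (mul_nonneg ha'.le
            (show (0:ℝ) ≤ k n - 1 by linarith)) (sq_nonneg ‖ybar n - v‖)
          nlinarith [m1, m2]
        linarith
      rw [le_div_iff₀ (by linarith : (0:ℝ) < 1 - c)]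
      linarith
    · have h6 : Filter.Tendsto
          (fun n => ‖x n - zbar n‖ * (2 * (X + ω) + ‖x n - zbar n‖)
            + (k n - 1) * (X + ω) ^ 2) Filter.atTop (nhds 0) := by
        have h7 : Filter.Tendsto
            (fun n => ‖x n - zbar n‖ * (2 * (X + ω) + ‖x n - zbar n‖))
            Filter.atTop (nhds 0) := by
          have hcst : Filter.Tendsto (fun _ : ℕ => 2 * (X + ω))
              Filter.atTop (nhds (2 * (X + ω))) := tendsto_const_nhds
          have := hzbx.mul (hcst.add hzbx)
          simpa using this
        have h8 : Filter.Tendsto (fun n => (k n - 1) * (X + ω) ^ 2)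
            Filter.atTop (nhds 0) := by
          have := (hklim.sub_const 1).mul_const ((X + ω) ^ 2)
          simpa using this
        simpa using h7.add h8
      simpa using h6.div_const (1 - c)
  -- ‖xₙ - ȳₙ‖ → 0
  have hyb0 : Filter.Tendsto (fun n => ‖x n - ybar n‖) Filter.atTop (nhds 0) := by
    apply squeeze_zero (fun n => norm_nonneg _)
      (g := fun n => Real.sqrt (P n) + e * Real.sqrt (P n / (d * (2 * α - e))))
    · intro n
      set G : ℝ := ‖A (iN n) (x n) - A (iN n) v‖ with hG_def
      have hG0 : 0 ≤ G := norm_nonneg _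
      have h1 := hP0 n
      have h2 : d * (2 * α - e) * G ^ 2 ≤ r n * (2 * α - r n) * G ^ 2 := by
        have hrn := hr n
        have m1 := mul_nonneg (mul_nonneg (sub_nonneg.mpr hrn.1) h2αe.le) (sq_nonneg G)
        have m2 := mul_nonneg (mul_nonneg (hr0 n).le (sub_nonneg.mpr hrn.2)) (sq_nonneg G)
        nlinarith [m1, m2]
      have h3 : G ^ 2 ≤ P n / (d * (2 * α - e)) := by
        rw [le_div_iff₀ hde2]
        nlinarith [sq_nonneg (‖x n - ybar n‖ - r n * G)]
      have h4 : G ≤ Real.sqrt (P n / (d * (2 * α - e))) := by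
        calc G = Real.sqrt (G ^ 2) := (Real.sqrt_sq hG0).symm
          _ ≤ _ := Real.sqrt_le_sqrt h3
      have h5 : ‖x n - ybar n‖ - r n * G ≤ Real.sqrt (P n) := by
        have h6 : (‖x n - ybar n‖ - r n * G) ^ 2 ≤ P n := by
          nlinarith [mul_nonneg (mul_nonneg (hr0 n).le
            (by linarith [(hr n).2] : (0:ℝ) ≤ 2 * α - r n)) (sq_nonneg G)]
        calc ‖x n - ybar n‖ - r n * G
            ≤ |‖x n - ybar n‖ - r n * G| := le_abs_self _
          _ = Real.sqrt ((‖x n - ybar n‖ - r n * G) ^ 2) :=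
              (Real.sqrt_sq_eq_abs _).symm
          _ ≤ Real.sqrt (P n) := Real.sqrt_le_sqrt h6
      have h7 : r n * G ≤ e * Real.sqrt (P n / (d * (2 * α - e))) := by
        calc r n * G ≤ e * G := mul_le_mul_of_nonneg_right (hr n).2 hG0
          _ ≤ e * Real.sqrt (P n / (d * (2 * α - e))) :=
              mul_le_mul_of_nonneg_left h4 (by linarith)
      linarith
    · have h8 : Filter.Tendsto (fun n => Real.sqrt (P n)) Filter.atTop (nhds 0) :=
        Alg1Aux.sqrt_tendsto_zero hPlim
      have h9 : Filter.Tendsto (fun n => Real.sqrt (P n / (d * (2 * α - e))))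
          Filter.atTop (nhds 0) :=
        Alg1Aux.sqrt_tendsto_zero (by simpa using hPlim.div_const (d * (2 * α - e)))
      have := h8.add (h9.const_mul e)
      simpa [mul_comm] using this
  -- conclusion 2 : ‖xₙ - yₙⁱ‖ → 0
  have conc2 : ∀ i, Filter.Tendsto (fun n => ‖x n - y n i‖) Filter.atTop (nhds 0) := by
    intro i
    apply squeeze_zero (fun n => norm_nonneg _) _ hyb0
    intro n
    calc ‖x n - y n i‖ = ‖y n i - x n‖ := norm_sub_rev _ _
      _ ≤ ‖y n (iN n) - x n‖ := hiN n i
      _ = ‖x n - ybar n‖ := by rw [← hybar n, norm_sub_rev]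
  -- conclusion 4 : ‖xₙ - Sⱼ xₙ‖ → 0
  have conc4 : ∀ j, Filter.Tendsto (fun n => ‖x n - S j (x n)‖) Filter.atTop (nhds 0) := by
    intro j
    -- uniform Lipschitz constant
    obtain ⟨K0, hK0⟩ := hklim.bddAbove_range
    set K : ℝ := max K0 1 with hK_def
    have hK1 : 1 ≤ K := le_max_right _ _
    have hkK : ∀ n, k n ≤ K := fun n =>
      le_trans (hK0 ⟨n, rfl⟩) (le_max_left _ _)
    set Λ : ℝ := (1 + κ) * (K * (1 - κ) + 2 * κ) / (1 - κ) ^ 2 with hΛ_def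
    have hκ1' : (0:ℝ) < 1 - κ := by linarith
    have hΛ0 : 0 ≤ Λ := by
      apply div_nonneg _ (sq_nonneg _)
      nlinarith [mul_le_mul_of_nonneg_right hK1 (le_of_lt hκ1')]
    set Lp : ℝ := Real.sqrt Λ with hLp_def
    have hLp0 : 0 ≤ Lp := Real.sqrt_nonneg _
    have hLip : ∀ n, 1 ≤ n → ∀ u ∈ C, ∀ w ∈ C,
        ‖(S j)^[n] u - (S j)^[n] w‖ ≤ Lp * ‖u - w‖ := by
      intro n hn u hu w hw
      have hs' := hasym j n hn u hu w hw
      have htri : ‖(u - (S j)^[n] u) - (w - (S j)^[n] w)‖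
          ≤ ‖u - w‖ + ‖(S j)^[n] u - (S j)^[n] w‖ := by
        have e : (u - (S j)^[n] u) - (w - (S j)^[n] w)
            = (u - w) - ((S j)^[n] u - (S j)^[n] w) := by abel
        rw [e]; exact norm_sub_le _ _
      have h2 : ‖(S j)^[n] u - (S j)^[n] w‖ ^ 2
          ≤ K * ‖u - w‖ ^ 2 + κ * (‖u - w‖ + ‖(S j)^[n] u - (S j)^[n] w‖) ^ 2 := by
        have h3 : ‖(u - (S j)^[n] u) - (w - (S j)^[n] w)‖ ^ 2
            ≤ (‖u - w‖ + ‖(S j)^[n] u - (S j)^[n] w‖) ^ 2 := by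
          nlinarith [norm_nonneg ((u - (S j)^[n] u) - (w - (S j)^[n] w)),
            norm_nonneg (u - w), norm_nonneg ((S j)^[n] u - (S j)^[n] w)]
        nlinarith [hs', mul_le_mul_of_nonneg_left h3 hκ0,
          mul_le_mul_of_nonneg_right (hkK n) (sq_nonneg ‖u - w‖)]
      have h4 := Alg1Aux.lip_quad hκ0 hκ1 h2
      have h5 : ‖(S j)^[n] u - (S j)^[n] w‖ ^ 2 ≤ Λ * ‖u - w‖ ^ 2 := by
        rw [hΛ_def, div_mul_eq_mul_div, le_div_iff₀ (by positivity)]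
        nlinarith [h4]
      calc ‖(S j)^[n] u - (S j)^[n] w‖
          = Real.sqrt (‖(S j)^[n] u - (S j)^[n] w‖ ^ 2) :=
            (Real.sqrt_sq (norm_nonneg _)).symm
        _ ≤ Real.sqrt (Λ * ‖u - w‖ ^ 2) := Real.sqrt_le_sqrt h5
        _ = Lp * ‖u - w‖ := by
            rw [Real.sqrt_mul hΛ0, Real.sqrt_sq (norm_nonneg _)]
    -- ‖Sⁿȳₙ - ȳₙ‖ → 0
    have hW : Filter.Tendsto (fun n => ‖(S j)^[n] (ybar n) - ybar n‖)
        Filter.atTop (nhds 0) := by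
      apply squeeze_zero' (Filter.Eventually.of_forall fun n => norm_nonneg _)
        (g := fun n => (‖x n - z n j‖ / (1 - c) + ‖x n - ybar n‖) / (1 - b))
      · filter_upwards [hac] with n han
        have hβn := hβ n
        set t : H := β n • ybar n + (1 - β n) • (S j)^[n] (ybar n) with ht_def
        have e1 : z n j - x n = (1 - a n) • (t - x n) := by
          rw [hz n j, ht_def]; module
        have e2 : ‖z n j - x n‖ = (1 - a n) * ‖t - x n‖ := by
          rw [e1, norm_smul, Real.norm_eq_abs, abs_of_nonneg (by linarith [ha1 n])]
        have h1 : ‖t - x n‖ ≤ ‖x n - z n j‖ / (1 - c) := by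
          rw [le_div_iff₀ (by linarith : (0:ℝ) < 1 - c), norm_sub_rev (x n) (z n j)]
          calc ‖t - x n‖ * (1 - c) ≤ ‖t - x n‖ * (1 - a n) :=
                mul_le_mul_of_nonneg_left (by linarith) (norm_nonneg _)
            _ = ‖z n j - x n‖ := by rw [e2]; ring
        have e3 : t - ybar n = (1 - β n) • ((S j)^[n] (ybar n) - ybar n) := by
          rw [ht_def]; module
        have e4 : ‖t - ybar n‖ = (1 - β n) * ‖(S j)^[n] (ybar n) - ybar n‖ := by
          rw [e3, norm_smul, Real.norm_eq_abs, abs_of_nonneg (by linarith [hβn.2])]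
        have h2 : ‖t - ybar n‖ ≤ ‖t - x n‖ + ‖x n - ybar n‖ := by
          calc ‖t - ybar n‖ = ‖(t - x n) + (x n - ybar n)‖ := by congr 1; abel
            _ ≤ _ := norm_add_le _ _
        rw [le_div_iff₀ (by linarith : (0:ℝ) < 1 - b)]
        calc ‖(S j)^[n] (ybar n) - ybar n‖ * (1 - b)
            ≤ ‖(S j)^[n] (ybar n) - ybar n‖ * (1 - β n) :=
              mul_le_mul_of_nonneg_left (by linarith [hβn.2]) (norm_nonneg _)
          _ = ‖t - ybar n‖ := by rw [e4]; ring
          _ ≤ ‖t - x n‖ + ‖x n - ybar n‖ := h2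
          _ ≤ ‖x n - z n j‖ / (1 - c) + ‖x n - ybar n‖ := by linarith
      · have := ((conc3 j).div_const (1 - c)).add hyb0
        simpa using this.div_const (1 - b)
    -- ‖Sⁿxₙ - xₙ‖ → 0
    have hQ : Filter.Tendsto (fun n => ‖(S j)^[n] (x n) - x n‖)
        Filter.atTop (nhds 0) := by
      apply squeeze_zero' (Filter.Eventually.of_forall fun n => norm_nonneg _)
        (g := fun n => Lp * ‖x n - ybar n‖ + ‖(S j)^[n] (ybar n) - ybar n‖
          + ‖x n - ybar n‖)
      · filter_upwards [Filter.eventually_ge_atTop 1] with n hn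
        have h1 : ‖(S j)^[n] (x n) - (S j)^[n] (ybar n)‖ ≤ Lp * ‖x n - ybar n‖ :=
          hLip n hn (x n) (hxCC n) (ybar n) (hybarC n)
        calc ‖(S j)^[n] (x n) - x n‖
            = ‖((S j)^[n] (x n) - (S j)^[n] (ybar n))
              + ((S j)^[n] (ybar n) - ybar n) + (ybar n - x n)‖ := by congr 1; abel
          _ ≤ ‖((S j)^[n] (x n) - (S j)^[n] (ybar n))
              + ((S j)^[n] (ybar n) - ybar n)‖ + ‖ybar n - x n‖ := norm_add_le _ _
          _ ≤ ‖(S j)^[n] (x n) - (S j)^[n] (ybar n)‖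
              + ‖(S j)^[n] (ybar n) - ybar n‖ + ‖ybar n - x n‖ := by
              linarith [norm_add_le ((S j)^[n] (x n) - (S j)^[n] (ybar n))
                ((S j)^[n] (ybar n) - ybar n)]
          _ ≤ Lp * ‖x n - ybar n‖ + ‖(S j)^[n] (ybar n) - ybar n‖
              + ‖x n - ybar n‖ := by
              rw [norm_sub_rev (ybar n) (x n)]; linarith
      · have := ((hyb0.const_mul Lp).add hW).add hyb0
        simpa using this
    -- final assembly
    have hshift : Filter.Tendsto (fun m => ‖x (m + 1) - S j (x (m + 1))‖)
        Filter.atTop (nhds 0) := by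
      apply squeeze_zero' (Filter.Eventually.of_forall fun n => norm_nonneg _)
        (g := fun m => ‖(S j)^[m + 1] (x (m + 1)) - x (m + 1)‖
          + Lp * (Lp * ‖x (m + 1) - x m‖ + ‖(S j)^[m] (x m) - x m‖
            + ‖x (m + 1) - x m‖))
      · filter_upwards [Filter.eventually_ge_atTop 1] with m hm
        set n : ℕ := m + 1 with hn_def
        have hSmC : (S j)^[m] (x n) ∈ C := (hS j).iterate m (hxCC n)
        have h1 : ‖(S j)^[n] (x n) - S j (x n)‖ ≤ Lp * ‖(S j)^[m] (x n) - x n‖ := by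
          have e : (S j)^[n] (x n) = S j ((S j)^[m] (x n)) :=
            Function.iterate_succ_apply' (S j) m (x n)
          have h2 := hLip 1 le_rfl ((S j)^[m] (x n)) hSmC (x n) (hxCC n)
          simpa [e] using h2
        have h3 : ‖(S j)^[m] (x n) - x n‖ ≤ Lp * ‖x n - x m‖
            + ‖(S j)^[m] (x m) - x m‖ + ‖x n - x m‖ := by
          have h4 : ‖(S j)^[m] (x n) - (S j)^[m] (x m)‖ ≤ Lp * ‖x n - x m‖ :=
            hLip m hm (x n) (hxCC n) (x m) (hxCC m)
          calc ‖(S j)^[m] (x n) - x n‖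
              = ‖((S j)^[m] (x n) - (S j)^[m] (x m))
                + ((S j)^[m] (x m) - x m) + (x m - x n)‖ := by congr 1; abel
            _ ≤ ‖((S j)^[m] (x n) - (S j)^[m] (x m))
                + ((S j)^[m] (x m) - x m)‖ + ‖x m - x n‖ := norm_add_le _ _
            _ ≤ ‖(S j)^[m] (x n) - (S j)^[m] (x m)‖
                + ‖(S j)^[m] (x m) - x m‖ + ‖x m - x n‖ := by
                linarith [norm_add_le ((S j)^[m] (x n) - (S j)^[m] (x m))
                  ((S j)^[m] (x m) - x m)]
            _ ≤ Lp * ‖x n - x m‖ + ‖(S j)^[m] (x m) - x m‖ + ‖x n - x m‖ := by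
                rw [norm_sub_rev (x m) (x n)]; linarith
        calc ‖x n - S j (x n)‖
            = ‖(x n - (S j)^[n] (x n)) + ((S j)^[n] (x n) - S j (x n))‖ := by
              congr 1; abel
          _ ≤ ‖x n - (S j)^[n] (x n)‖ + ‖(S j)^[n] (x n) - S j (x n)‖ :=
              norm_add_le _ _
          _ ≤ ‖(S j)^[n] (x n) - x n‖ + Lp * ‖(S j)^[m] (x n) - x n‖ := by
              rw [norm_sub_rev (x n) ((S j)^[n] (x n))]; linarith
          _ ≤ ‖(S j)^[n] (x n) - x n‖
              + Lp * (Lp * ‖x n - x m‖ + ‖(S j)^[m] (x m) - x m‖ + ‖x n - x m‖) :=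
              by linarith [mul_le_mul_of_nonneg_left h3 hLp0]
      · have hQ1 : Filter.Tendsto (fun m => ‖(S j)^[m + 1] (x (m + 1)) - x (m + 1)‖)
            Filter.atTop (nhds 0) := (tendsto_add_atTop_iff_nat 1).mpr hQ
        have h5 : Filter.Tendsto
            (fun m => Lp * ‖x (m + 1) - x m‖ + ‖(S j)^[m] (x m) - x m‖
              + ‖x (m + 1) - x m‖) Filter.atTop (nhds 0) := by
          have := ((hdist.const_mul Lp).add hQ).add hdist
          simpa using this
        have := hQ1.add (h5.const_mul Lp)
        simpa using this
    exact (tendsto_add_atTop_iff_nat 1).mp hshift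
  exact ⟨hcseq, conc2, conc3, conc4⟩
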